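/- Call a 2-vector of positive reals mixed if one of its entries is at least 1 and the other is at most 1. Let H1 and H2 be complex matrices of proper dimensions, each with two columns, such that μ(H1,H2) is mixed, let C be a 2×2 Hermitian positive semi-definite matrix with positive semi-definite square root C^{1/2}, and for i = 1, 2 let G_i be the matrix obtained by stacking H_i C^{1/2} on top of the 2×2 identity matrix. Then there exists a joint unitary triangularization G1 = U1 T1 V*, G2 = U2 T2 V* with positive real diagonal entries such that (T1)_{2,2} = (T2)_{2,2}. -/

import Mathlib

open Matrix BigOperators Finset
open scoped ComplexOrder

namespace NetMod

/-- A square complex matrix is unitary. -/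
def IsUnitary {k : ℕ} (U : Matrix (Fin k) (Fin k) ℂ) : Prop := Uᴴ * U = 1

/-- A generalized upper-triangular matrix: entry (i,j) vanishes whenever i > j. -/
def GenUpperTri {m n : ℕ} (T : Matrix (Fin m) (Fin n) ℂ) : Prop :=
  ∀ (i : Fin m) (j : Fin n), (j : ℕ) < (i : ℕ) → T i j = 0

/-- The diagonal entries of a (tall) matrix are positive reals. -/
def PosRealDiag {m n : ℕ} (h : n ≤ m) (T : Matrix (Fin m) (Fin n) ℂ) : Prop :=
  ∀ j : Fin n, 0 < (T (Fin.castLE h j) j).re ∧ (T (Fin.castLE h j) j).im = 0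

/-- Joint unitary triangularization of the pair (A1, A2). -/
def JointTriang {m1 m2 n : ℕ}
    (A1 : Matrix (Fin m1) (Fin n) ℂ) (A2 : Matrix (Fin m2) (Fin n) ℂ)
    (U1 : Matrix (Fin m1) (Fin m1) ℂ) (U2 : Matrix (Fin m2) (Fin m2) ℂ)
    (V : Matrix (Fin n) (Fin n) ℂ)
    (T1 : Matrix (Fin m1) (Fin n) ℂ) (T2 : Matrix (Fin m2) (Fin n) ℂ) : Prop :=
  IsUnitary U1 ∧ IsUnitary U2 ∧ IsUnitary V ∧
  GenUpperTri T1 ∧ GenUpperTri T2 ∧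
  A1 = U1 * T1 * Vᴴ ∧ A2 = U2 * T2 * Vᴴ

/-- `μ` is the generalized-singular-value vector of the pair (A1, A2): it is
nonincreasing, positive, and its squared entries are exactly the solutions, with
algebraic multiplicity, of `det(A1ᴴA1 − x · A2ᴴA2) = 0` (expressed by the
polynomial identity `det(A1ᴴA1 − x A2ᴴA2) = det(A2ᴴA2) ∏ⱼ (μⱼ² − x)`). -/
def IsGSV {m1 m2 n : ℕ}
    (A1 : Matrix (Fin m1) (Fin n) ℂ) (A2 : Matrix (Fin m2) (Fin n) ℂ)
    (μ : Fin n → ℝ) : Prop :=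
  Antitone μ ∧ (∀ j, 0 < μ j) ∧
  ∀ x : ℂ, (A1ᴴ * A1 - x • (A2ᴴ * A2)).det = (A2ᴴ * A2).det * ∏ j, ((μ j : ℂ) ^ 2 - x)

/-- The vector `x` sorted in nonincreasing order. -/
noncomputable def sortDesc {n : ℕ} (x : Fin n → ℝ) : Fin n → ℝ :=
  fun i => x (Tuple.sort x i.rev)

/-- Product of the first `k` entries of `x`. -/
def PProd {n : ℕ} (x : Fin n → ℝ) (k : ℕ) : ℝ :=
  ∏ j ∈ Finset.univ.filter (fun j : Fin n => (j : ℕ) < k), x j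

/-- Multiplicative majorization: equal total products, and every partial product of
the nonincreasingly sorted `x` dominates that of the sorted `y`. -/
def MulMaj {n : ℕ} (x y : Fin n → ℝ) : Prop :=
  (∏ j, x j = ∏ j, y j) ∧
  ∀ k : ℕ, 1 ≤ k → k < n → PProd (sortDesc y) k ≤ PProd (sortDesc x) k

/-- Stacking `F` on top of the `n × n` identity matrix. -/
def augment {m n : ℕ} (F : Matrix (Fin m) (Fin n) ℂ) : Matrix (Fin (m + n)) (Fin n) ℂ :=
  Matrix.of fun i j => if h : (i : ℕ) < m then F ⟨i, h⟩ j
    else if (i : ℕ) = m + (j : ℕ) then 1 else 0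

/-- The top `n × n` square part of a tall matrix. -/
def squarePart {m n : ℕ} (h : n ≤ m) (T : Matrix (Fin m) (Fin n) ℂ) :
    Matrix (Fin n) (Fin n) ℂ :=
  T.submatrix (Fin.castLE h) id

/-- A 2-vector is mixed if one entry is at least 1 and the other at most 1. -/
def Mixed (μ : Fin 2 → ℝ) : Prop := (μ 0 ≤ 1 ∧ 1 ≤ μ 1) ∨ (μ 1 ≤ 1 ∧ 1 ≤ μ 0)

end NetMod
namespace NetModAux

lemma det_smul_sub_smul (A B : Matrix (Fin 2) (Fin 2) ℂ) :
    (B.det • A - A.det • B).det = A.det * B.det * (A - B).det := by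
  simp only [Matrix.det_fin_two, Matrix.sub_apply, Matrix.smul_apply, smul_eq_mul]
  ring

lemma exists_null_vector (α β : ℝ) (c : ℂ) (h : α * β ≤ Complex.normSq c) :
    ∃ x y : ℂ, Complex.normSq x + Complex.normSq y = 1 ∧
      (starRingEnd ℂ) x * ((α : ℂ) * x + c * y)
        + (starRingEnd ℂ) y * ((starRingEnd ℂ) c * x + (β : ℂ) * y) = 0 := by
  by_cases hα : α = 0
  · exact ⟨1, 0, by simp, by simp [hα]⟩
  · set ac : ℝ := ‖c‖ with hac
    have hac2 : ac ^ 2 = Complex.normSq c := Complex.sq_norm c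
    set D : ℝ := Complex.normSq c - α * β with hD
    have hD0 : 0 ≤ D := by simp only [hD]; linarith
    set t : ℝ := Real.sqrt D with ht
    have ht2 : t ^ 2 = D := Real.sq_sqrt hD0
    set s : ℝ := (-ac + t) / α with hs
    have hroot : α * s ^ 2 + 2 * ac * s + β = 0 := by
      have hs' : α * s = -ac + t := by rw [hs]; field_simp
      have h2 : α * (α * s ^ 2 + 2 * ac * s + β)
          = (α * s) ^ 2 + 2 * ac * (α * s) + α * β := by ring
      have h3 : α * (α * s ^ 2 + 2 * ac * s + β) = 0 := by
        rw [h2, hs']; nlinarith [ht2, hac2]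
      exact (mul_eq_zero.mp h3).resolve_left hα
    set e : ℂ := if c = 0 then 1 else (starRingEnd ℂ) c / (ac : ℂ) with he
    have hnse : Complex.normSq e = 1 := by
      by_cases hc : c = 0
      · simp [he, hc]
      · have hc' : Complex.normSq c ≠ 0 := (Complex.normSq_pos.mpr hc).ne'
        rw [he, if_neg hc, map_div₀, Complex.normSq_conj, Complex.normSq_ofReal,
          ← pow_two, hac2, div_self hc']
    have hee : (starRingEnd ℂ) e * e = 1 := by
      rw [← Complex.normSq_eq_conj_mul_self, hnse, Complex.ofReal_one]
    have hce : c * e = (ac : ℂ) := by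
      by_cases hc : c = 0
      · simp [he, hc, hac]
      · have hac0 : (ac : ℂ) ≠ 0 := by
          simpa [hac, Complex.ofReal_eq_zero] using (norm_ne_zero_iff.mpr hc)
        rw [he, if_neg hc]
        field_simp
        rw [mul_comm, ← Complex.normSq_eq_conj_mul_self, ← hac2]
        push_cast
        ring
    have hce' : (starRingEnd ℂ) e * (starRingEnd ℂ) c = (ac : ℂ) := by
      have := congrArg (starRingEnd ℂ) hce
      simpa [_root_.map_mul, Complex.conj_ofReal, mul_comm] using this
    set N : ℝ := Real.sqrt (s ^ 2 + 1) with hN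
    have hN2 : N ^ 2 = s ^ 2 + 1 := Real.sq_sqrt (by positivity)
    have hNpos : 0 < N := Real.sqrt_pos.mpr (by positivity)
    have hNne : (N : ℂ) ≠ 0 := by exact_mod_cast hNpos.ne'
    refine ⟨((s / N : ℝ) : ℂ), ((N⁻¹ : ℝ) : ℂ) * e, ?_, ?_⟩
    · rw [Complex.normSq_ofReal, _root_.map_mul, Complex.normSq_ofReal, hnse]
      have : s / N * (s / N) + N⁻¹ * N⁻¹ * 1 = (s ^ 2 + 1) / N ^ 2 := by
        field_simp
      rw [this, hN2, div_self (by positivity)]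
    · have hrootC : (α : ℂ) * (s : ℂ) ^ 2 + 2 * (ac : ℂ) * (s : ℂ) + (β : ℂ) = 0 := by
        exact_mod_cast congrArg (fun r : ℝ => (r : ℂ)) hroot
      have hc1 : ((s / N : ℝ) : ℂ) = (s : ℂ) * (N : ℂ)⁻¹ := by
        push_cast; ring
      have hc2 : ((N⁻¹ : ℝ) : ℂ) = (N : ℂ)⁻¹ := by push_cast; ring
      rw [hc1, hc2]
      simp only [_root_.map_mul, Complex.conj_ofReal, map_inv₀]
      linear_combination ((s : ℂ) * (N : ℂ)⁻¹ * (N : ℂ)⁻¹) * hce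
        + ((s : ℂ) * (N : ℂ)⁻¹ * (N : ℂ)⁻¹) * hce'
        + ((β : ℂ) * (N : ℂ)⁻¹ * (N : ℂ)⁻¹) * hee
        + ((N : ℂ)⁻¹ * (N : ℂ)⁻¹) * hrootC

end NetModAux

namespace NetModAux

lemma augment_gram {m n : ℕ} (F : Matrix (Fin m) (Fin n) ℂ) :
    (NetMod.augment F)ᴴ * (NetMod.augment F) = Fᴴ * F + 1 := by
  ext j l
  rw [Matrix.mul_apply]
  rw [Fin.sum_univ_add (f := fun i => ((NetMod.augment F)ᴴ) j i * (NetMod.augment F) i l)]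
  have h1 : ∀ i : Fin m,
      ((NetMod.augment F)ᴴ) j (Fin.castAdd n i) * (NetMod.augment F) (Fin.castAdd n i) l
      = (Fᴴ) j i * F i l := by
    intro i
    have hi : ((Fin.castAdd n i : Fin (m + n)) : ℕ) < m := i.isLt
    simp [NetMod.augment, Matrix.conjTranspose_apply, hi]
  have h2 : ∀ i : Fin n,
      ((NetMod.augment F)ᴴ) j (Fin.natAdd m i) * (NetMod.augment F) (Fin.natAdd m i) l
      = (if i = j then 1 else 0) * (if i = l then 1 else 0) := by
    intro i
    have hi : ¬ ((Fin.natAdd m i : Fin (m + n)) : ℕ) < m := by simp [Fin.natAdd]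
    have hj : (((Fin.natAdd m i : Fin (m + n)) : ℕ) = m + (j : ℕ)) ↔ i = j := by
      simp [Fin.natAdd, Fin.ext_iff]
    have hl : (((Fin.natAdd m i : Fin (m + n)) : ℕ) = m + (l : ℕ)) ↔ i = l := by
      simp [Fin.natAdd, Fin.ext_iff]
    simp only [NetMod.augment, Matrix.conjTranspose_apply, Matrix.of_apply, dif_neg hi]
    rw [if_congr hj rfl rfl, if_congr hl rfl rfl]
    split_ifs <;> simp
  rw [Finset.sum_congr rfl (fun i _ => h1 i), Finset.sum_congr rfl (fun i _ => h2 i)]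
  simp [Matrix.mul_apply, Matrix.add_apply, Matrix.one_apply, Finset.sum_ite_eq,
    eq_comm]

lemma augment_gram_posDef {m n : ℕ} (F : Matrix (Fin m) (Fin n) ℂ) :
    ((NetMod.augment F)ᴴ * (NetMod.augment F)).PosDef := by
  rw [augment_gram]
  exact Matrix.PosDef.posSemidef_add (Matrix.posSemidef_conjTranspose_mul_self F)
    Matrix.PosDef.one

end NetModAux

namespace NetModAux

local notation "⟪" x ", " y "⟫" => @inner ℂ _ _ x y

set_option maxHeartbeats 1000000 in
lemma qr_two {k : ℕ} (A : Matrix (Fin (k + 2)) (Fin 2) ℂ) (hA : (Aᴴ * A).PosDef) :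
    ∃ (U : Matrix (Fin (k + 2)) (Fin (k + 2)) ℂ) (T : Matrix (Fin (k + 2)) (Fin 2) ℂ),
      NetMod.IsUnitary U ∧ NetMod.GenUpperTri T ∧ A = U * T ∧
      NetMod.PosRealDiag (Nat.le_add_left 2 k) T ∧
      T (Fin.castLE (Nat.le_add_left 2 k) 1) 1
        = ((Real.sqrt ((Aᴴ * A).det.re / ((Aᴴ * A) 0 0).re) : ℝ) : ℂ) := by
  set P := Aᴴ * A with hPdef
  set toE : (Fin (k + 2) → ℂ) → EuclideanSpace ℂ (Fin (k + 2)) :=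
    fun u => (WithLp.equiv 2 (Fin (k + 2) → ℂ)).symm u with htoE
  set a0 : EuclideanSpace ℂ (Fin (k + 2)) := toE (fun i => A i 0) with ha0
  set a1 : EuclideanSpace ℂ (Fin (k + 2)) := toE (fun i => A i 1) with ha1
  have hinner : ∀ u v : Fin (k + 2) → ℂ,
      ⟪toE u, toE v⟫ = ∑ i, (starRingEnd ℂ) (u i) * v i := by
    intro u v
    simp [htoE, PiLp.inner_apply, RCLike.inner_apply]
    exact Finset.sum_congr rfl (fun i _ => mul_comm _ _)
  have h00 : ⟪a0, a0⟫ = P 0 0 := by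
    rw [ha0, hinner]; simp [hPdef, Matrix.mul_apply, Matrix.conjTranspose_apply]
  have h01 : ⟪a0, a1⟫ = P 0 1 := by
    rw [ha0, ha1, hinner]; simp [hPdef, Matrix.mul_apply, Matrix.conjTranspose_apply]
  have h11 : ⟪a1, a1⟫ = P 1 1 := by
    rw [ha1, hinner]; simp [hPdef, Matrix.mul_apply, Matrix.conjTranspose_apply]
  -- positivity of the (0,0) entry
  have hP00pos : 0 < (P 0 0).re := by
    have hx : (Pi.single (0 : Fin 2) 1 : Fin 2 → ℂ) ≠ 0 := by
      intro h
      have := congrFun h 0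
      simp at this
    have h := hA.re_dotProduct_pos hx
    have hval : star (Pi.single (0 : Fin 2) 1 : Fin 2 → ℂ) ⬝ᵥ
        (P *ᵥ Pi.single (0 : Fin 2) 1) = P 0 0 := by
      simp [dotProduct, Matrix.mulVec, Pi.single_apply, Finset.sum_ite_eq,
        Fin.sum_univ_two]
    rw [hval] at h
    simpa using h
  -- norms
  set n0 : ℝ := ‖a0‖ with hn0
  have hn0sq : n0 ^ 2 = (P 0 0).re := by
    rw [hn0, norm_sq_eq_re_inner (𝕜 := ℂ), h00]; rfl
  have hn0pos : 0 < n0 := by nlinarith [norm_nonneg a0]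
  have hn0ne : ((n0 : ℝ) : ℂ) ≠ 0 := by exact_mod_cast hn0pos.ne'
  set q0 : EuclideanSpace ℂ (Fin (k + 2)) := ((n0 : ℝ) : ℂ)⁻¹ • a0 with hq0
  have hq0n : ‖q0‖ = 1 := by
    rw [hq0, norm_smul, norm_inv, Complex.norm_real, Real.norm_eq_abs,
      abs_of_pos hn0pos, ← hn0, inv_mul_cancel₀ hn0pos.ne']
  have hq0q0 : ⟪q0, q0⟫ = 1 := by
    rw [inner_self_eq_norm_sq_to_K, hq0n]; norm_num
  set c : ℂ := ⟪q0, a1⟫ with hcdef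
  have hc : c = ((n0 : ℝ) : ℂ)⁻¹ * P 0 1 := by
    rw [hcdef, hq0, inner_smul_left, h01, map_inv₀, Complex.conj_ofReal]
  set w : EuclideanSpace ℂ (Fin (k + 2)) := a1 - c • q0 with hw
  have hq0w : ⟪q0, w⟫ = 0 := by
    rw [hw, inner_sub_right, inner_smul_right, hq0q0, mul_one, ← hcdef, sub_self]
  have he1 : ⟪a1, q0⟫ = (starRingEnd ℂ) c := by
    rw [hcdef, ← inner_conj_symm]
  have hww : ⟪w, w⟫ = ⟪a1, a1⟫ - (starRingEnd ℂ) c * c := by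
    rw [hw]
    simp only [inner_sub_left, inner_sub_right, inner_smul_left, inner_smul_right,
      hq0q0, he1, ← hcdef]
    ring
  have hwsq : ‖w‖ ^ 2 = (P 1 1).re - Complex.normSq c := by
    have : ⟪w, w⟫ = P 1 1 - ((Complex.normSq c : ℝ) : ℂ) := by
      rw [hww, h11, ← Complex.normSq_eq_conj_mul_self]
    rw [norm_sq_eq_re_inner (𝕜 := ℂ), this]
    simp
  -- Hermitian facts
  have hP10 : P 1 0 = (starRingEnd ℂ) (P 0 1) := by
    have := hA.isHermitian
    rw [Matrix.IsHermitian] at this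
    conv_lhs => rw [← this]
    simp [Matrix.conjTranspose_apply]
  have hP00im : (P 0 0).im = 0 := by
    have : ⟪a0, a0⟫ = ((‖a0‖ : ℝ) : ℂ) ^ 2 := inner_self_eq_norm_sq_to_K a0
    rw [h00] at this
    rw [this]
    simp [← Complex.ofReal_pow]
  have hP11im : (P 1 1).im = 0 := by
    have : ⟪a1, a1⟫ = ((‖a1‖ : ℝ) : ℂ) ^ 2 := inner_self_eq_norm_sq_to_K a1
    rw [h11] at this
    rw [this]
    simp [← Complex.ofReal_pow]
  have hdetre : P.det.re = (P 0 0).re * (P 1 1).re - Complex.normSq (P 0 1) := by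
    rw [Matrix.det_fin_two, hP10]
    have : P 0 1 * (starRingEnd ℂ) (P 0 1) = ((Complex.normSq (P 0 1) : ℝ) : ℂ) :=
      Complex.mul_conj _
    rw [this]
    simp [Complex.sub_re, Complex.mul_re, hP00im, hP11im]
  have hnsqc : Complex.normSq c = Complex.normSq (P 0 1) / (P 0 0).re := by
    have hmul : Complex.normSq c
        = Complex.normSq (((n0 : ℝ) : ℂ)⁻¹) * Complex.normSq (P 0 1) := by
      rw [hc]; exact map_mul Complex.normSq _ _
    rw [hmul, map_inv₀, Complex.normSq_ofReal, ← hn0sq]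
    rw [pow_two]
    field_simp
  have hwkey : ‖w‖ ^ 2 = P.det.re / (P 0 0).re := by
    rw [hwsq, hnsqc, hdetre]
    field_simp
  have hdetpos : 0 < P.det.re := by
    have h := hA.det_pos
    rw [Complex.lt_def] at h
    simpa using h.1
  have hwpos : 0 < ‖w‖ := by
    have : 0 < ‖w‖ ^ 2 := by rw [hwkey]; exact div_pos hdetpos hP00pos
    nlinarith [norm_nonneg w]
  set n1 : ℝ := ‖w‖ with hn1
  have hn1ne : ((n1 : ℝ) : ℂ) ≠ 0 := by exact_mod_cast hwpos.ne'
  set q1 : EuclideanSpace ℂ (Fin (k + 2)) := ((n1 : ℝ) : ℂ)⁻¹ • w with hq1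
  have hq1n : ‖q1‖ = 1 := by
    rw [hq1, norm_smul, norm_inv, Complex.norm_real, Real.norm_eq_abs,
      abs_of_pos hwpos, ← hn1, inv_mul_cancel₀ hwpos.ne']
  have hq1q1 : ⟪q1, q1⟫ = 1 := by
    rw [inner_self_eq_norm_sq_to_K, hq1n]; norm_num
  have hq0q1 : ⟪q0, q1⟫ = 0 := by
    rw [hq1, inner_smul_right, hq0w, mul_zero]
  have hq1q0 : ⟪q1, q0⟫ = 0 := by
    rw [← inner_conj_symm, hq0q1, map_zero]
  -- extend to an orthonormal basis
  set v : Fin (k + 2) → EuclideanSpace ℂ (Fin (k + 2)) :=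
    fun i => if i = 0 then q0 else q1 with hv
  have hone : (1 : Fin (k + 2)) ≠ 0 := one_ne_zero
  have hcard : Module.finrank ℂ (EuclideanSpace ℂ (Fin (k + 2)))
      = Fintype.card (Fin (k + 2)) := by simp
  have hvo : Orthonormal ℂ (Set.restrict {0, 1} v) := by
    rw [orthonormal_iff_ite]
    rintro ⟨i, hi⟩ ⟨j, hj⟩
    simp only [Set.mem_insert_iff, Set.mem_singleton_iff] at hi hj
    rcases hi with rfl | rfl <;> rcases hj with rfl | rfl <;>
      simp [hv, Set.restrict, Subtype.ext_iff, hq0q0, hq0q1, hq1q0, hq1q1, hone, hq0n, hq1n]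
  obtain ⟨b, hb⟩ := hvo.exists_orthonormalBasis_extension_of_card_eq hcard
  have hb0 : b 0 = q0 := by
    have := hb 0 (by simp)
    simpa [hv] using this
  have hb1 : b 1 = q1 := by
    have := hb 1 (by simp)
    simpa [hv, hone] using this
  -- the unitary and triangular factors
  set U : Matrix (Fin (k + 2)) (Fin (k + 2)) ℂ := Matrix.of fun i l => b l i with hUdef
  set T : Matrix (Fin (k + 2)) (Fin 2) ℂ := Matrix.of fun i j =>
    if (i : ℕ) = 0 then (if j = 0 then ((n0 : ℝ) : ℂ) else c)
    else if (i : ℕ) = 1 then (if j = 1 then ((n1 : ℝ) : ℂ) else 0) else 0 with hTdef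
  refine ⟨U, T, ?_, ?_, ?_, ?_, ?_⟩
  · -- unitary
    have hbo := b.orthonormal
    rw [orthonormal_iff_ite] at hbo
    ext l l'
    have h := hbo l l'
    rw [PiLp.inner_apply] at h
    simp only [RCLike.inner_apply] at h
    rw [Finset.sum_congr rfl (fun x _ => mul_comm _ _)] at h
    simpa [Matrix.mul_apply, Matrix.conjTranspose_apply, Matrix.one_apply, hUdef]
      using h
  · -- triangular
    intro i j hij
    simp only [hTdef, Matrix.of_apply]
    by_cases hi0 : (i : ℕ) = 0
    · omega
    · rw [if_neg hi0]
      by_cases hi1 : (i : ℕ) = 1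
      · rw [if_pos hi1]
        have hj1 : ¬ j = 1 := by
          intro h
          rw [h] at hij
          have : ((1 : Fin 2) : ℕ) = 1 := rfl
          omega
        rw [if_neg hj1]
      · rw [if_neg hi1]
  · -- A = U * T
    ext i j
    have hzne : (0 : Fin (k + 2)) ≠ 1 := hone.symm
    have hsum : (U * T) i j = U i 0 * T 0 j + U i 1 * T 1 j := by
      rw [Matrix.mul_apply,
        ← Finset.sum_subset (Finset.subset_univ ({0, 1} : Finset (Fin (k + 2))))]
      · rw [Finset.sum_pair hzne]
      · intro l _ hl
        simp only [Finset.mem_insert, Finset.mem_singleton, not_or] at hl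
        have hl0 : ¬ (l : ℕ) = 0 := fun h => hl.1 (Fin.ext (by simpa using h))
        have hl1 : ¬ (l : ℕ) = 1 := fun h => hl.2 (Fin.ext (by simpa using h))
        simp [hTdef, hl0, hl1, hl.1]
    rw [hsum]
    have hU0 : U i 0 = q0 i := by rw [hUdef]; simp [hb0]
    have hU1 : U i 1 = q1 i := by rw [hUdef]; simp [hb1]
    have hq0i : q0 i = ((n0 : ℝ) : ℂ)⁻¹ * A i 0 := by
      rw [hq0, ha0]; simp [htoE]
    have hq1i : q1 i = ((n1 : ℝ) : ℂ)⁻¹ * (A i 1 - c * q0 i) := by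
      rw [hq1, hw, ha1]; simp [htoE]
    have hT00 : T 0 j = (if j = 0 then ((n0 : ℝ) : ℂ) else c) := by
      simp [hTdef]
    have hT10 : T 1 j = (if j = 1 then ((n1 : ℝ) : ℂ) else 0) := by
      simp [hTdef]
    rw [hU0, hU1, hT00, hT10, hq1i, hq0i]
    by_cases hj0 : j = 0
    · subst hj0
      rw [if_pos rfl, if_neg (by decide : ¬ (0 : Fin 2) = 1)]
      field_simp
      ring
    · have hjv : (j : ℕ) ≠ 0 := fun h => hj0 (Fin.ext (by simpa using h))
      have hj1 : j = 1 := Fin.ext (by have := j.isLt; simp [Fin.val_one]; omega)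
      subst hj1
      rw [if_neg (by decide : ¬ (1 : Fin 2) = 0), if_pos rfl]
      field_simp
      ring
  · -- positive real diagonal
    intro j
    fin_cases j
    · have : ((Fin.castLE (Nat.le_add_left 2 k) 0 : Fin (k + 2)) : ℕ) = 0 := rfl
      simp [hTdef, this, hn0pos]
    · have h1 : ((Fin.castLE (Nat.le_add_left 2 k) 1 : Fin (k + 2)) : ℕ) = 1 := rfl
      simp [hTdef, h1, hwpos, (show Fin.castLE (Nat.le_add_left 2 k) (1 : Fin 2) ≠ 0 from fun h => by have := congrArg Fin.val h; rw [h1] at this; simp at this)]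
  · -- value of the (1,1) entry
    have h1 : ((Fin.castLE (Nat.le_add_left 2 k) 1 : Fin (k + 2)) : ℕ) = 1 := rfl
    have hT : T (Fin.castLE (Nat.le_add_left 2 k) 1) 1 = ((n1 : ℝ) : ℂ) := by
      simp [hTdef, h1, (show Fin.castLE (Nat.le_add_left 2 k) (1 : Fin 2) ≠ 0 from fun h => by have := congrArg Fin.val h; rw [h1] at this; simp at this)]
    rw [hT]
    congr 1
    rw [← Real.sqrt_sq hwpos.le, hwkey]

end NetModAux

namespace NetModAux

lemma posdef_conj {n : ℕ} {P : Matrix (Fin n) (Fin n) ℂ} (hP : P.PosDef)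
    (V : Matrix (Fin n) (Fin n) ℂ) (hV : Vᴴ * V = 1) : (Vᴴ * P * V).PosDef := by
  have hdet : Vᴴ.det * V.det = 1 := by rw [← Matrix.det_mul, hV, Matrix.det_one]
  have hVu : IsUnit V := (Matrix.isUnit_iff_isUnit_det V).mpr
    (IsUnit.of_mul_eq_one _ (by rw [mul_comm]; exact hdet))
  have hinj : Function.Injective V.mulVec := Matrix.mulVec_injective_iff_isUnit.mpr hVu
  exact hP.conjTranspose_mul_mul_same hinj

lemma posdef_entry00_re_pos {P : Matrix (Fin 2) (Fin 2) ℂ} (hP : P.PosDef) :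
    0 < (P 0 0).re := by
  have hx : (Pi.single (0 : Fin 2) 1 : Fin 2 → ℂ) ≠ 0 := by
    intro h
    have := congrFun h 0
    simp at this
  have h := hP.re_dotProduct_pos hx
  have hval : star (Pi.single (0 : Fin 2) 1 : Fin 2 → ℂ) ⬝ᵥ
      (P *ᵥ Pi.single (0 : Fin 2) 1) = P 0 0 := by
    simp [dotProduct, Matrix.mulVec, Pi.single_apply, Finset.sum_ite_eq, Fin.sum_univ_two]
  rw [hval] at h
  simpa using h

end NetModAux

set_option maxHeartbeats 3000000 in
theorem augmented_joint_triangularization_equal_second_diag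
    {k1 k2 : ℕ} (h1 : 2 ≤ k1) (h2 : 2 ≤ k2)
    (H1 : Matrix (Fin k1) (Fin 2) ℂ) (H2 : Matrix (Fin k2) (Fin 2) ℂ)
    (hH1 : H1.rank = 2) (hH2 : H2.rank = 2)
    (C C12 : Matrix (Fin 2) (Fin 2) ℂ)
    (hC : C.PosSemidef) (hC12 : C12.PosSemidef) (hsq : C12 * C12 = C)
    (μ : Fin 2 → ℝ) (hμ : NetMod.IsGSV H1 H2 μ) (hmix : NetMod.Mixed μ) :
    ∃ (U1 : Matrix (Fin (k1 + 2)) (Fin (k1 + 2)) ℂ)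
      (U2 : Matrix (Fin (k2 + 2)) (Fin (k2 + 2)) ℂ)
      (V : Matrix (Fin 2) (Fin 2) ℂ)
      (T1 : Matrix (Fin (k1 + 2)) (Fin 2) ℂ) (T2 : Matrix (Fin (k2 + 2)) (Fin 2) ℂ),
      NetMod.JointTriang (NetMod.augment (H1 * C12)) (NetMod.augment (H2 * C12))
        U1 U2 V T1 T2 ∧
      NetMod.PosRealDiag (Nat.le_add_left 2 k1) T1 ∧
      NetMod.PosRealDiag (Nat.le_add_left 2 k2) T2 ∧
      T1 (Fin.castLE (Nat.le_add_left 2 k1) 1) 1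
        = T2 (Fin.castLE (Nat.le_add_left 2 k2) 1) 1 := by
  classical
  set G1 := NetMod.augment (H1 * C12) with hG1
  set G2 := NetMod.augment (H2 * C12) with hG2
  set P1 := G1ᴴ * G1 with hP1def
  set P2 := G2ᴴ * G2 with hP2def
  have hP1 : P1.PosDef := NetModAux.augment_gram_posDef (H1 * C12)
  have hP2 : P2.PosDef := NetModAux.augment_gram_posDef (H2 * C12)
  -- determinants are positive reals
  set r1 : ℝ := P1.det.re with hr1
  set r2 : ℝ := P2.det.re with hr2
  have hd1 := hP1.det_pos
  have hd2 := hP2.det_pos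
  rw [Complex.lt_def] at hd1 hd2
  have hr1pos : 0 < r1 := by simpa [hr1] using hd1.1
  have hr2pos : 0 < r2 := by simpa [hr2] using hd2.1
  have hd1c : P1.det = ((r1 : ℝ) : ℂ) := by
    apply Complex.ext
    · simp [hr1]
    · simp [← hd1.2]
  have hd2c : P2.det = ((r2 : ℝ) : ℂ) := by
    apply Complex.ext
    · simp [hr2]
    · simp [← hd2.2]
  -- the Hermitian matrix M
  set M : Matrix (Fin 2) (Fin 2) ℂ := P2.det • P1 - P1.det • P2 with hM
  have hMherm : Mᴴ = M := by
    rw [hM, Matrix.conjTranspose_sub, Matrix.conjTranspose_smul,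
      Matrix.conjTranspose_smul, hP1.isHermitian.eq, hP2.isHermitian.eq,
      hd1c, hd2c]
    simp [Complex.conj_ofReal]
  -- determinant of M is a nonpositive real
  have hMdet : M.det = P1.det * P2.det * (P1 - P2).det :=
    NetModAux.det_smul_sub_smul P1 P2
  -- P1 - P2 in terms of the GSV data
  set Q1 := H1ᴴ * H1 with hQ1
  set Q2 := H2ᴴ * H2 with hQ2
  have hgram : ∀ (kk : ℕ) (H : Matrix (Fin kk) (Fin 2) ℂ),
      (NetMod.augment (H * C12))ᴴ * (NetMod.augment (H * C12))
        = C12ᴴ * (Hᴴ * H) * C12 + 1 := by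
    intro kk H
    rw [NetModAux.augment_gram, Matrix.conjTranspose_mul]
    simp [Matrix.mul_assoc]
  have hP1e : P1 = C12ᴴ * Q1 * C12 + 1 := by rw [hP1def, hG1, hgram k1 H1, hQ1]
  have hP2e : P2 = C12ᴴ * Q2 * C12 + 1 := by rw [hP2def, hG2, hgram k2 H2, hQ2]
  have hsub : P1 - P2 = C12ᴴ * (Q1 - Q2) * C12 := by
    rw [hP1e, hP2e, Matrix.mul_sub, Matrix.sub_mul]
    abel
  have hQdet : (Q1 - Q2).det
      = Q2.det * (((μ 0 : ℂ) ^ 2 - 1) * ((μ 1 : ℂ) ^ 2 - 1)) := by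
    have h := hμ.2.2 1
    rw [one_smul] at h
    rw [hQ1, hQ2, h, Fin.prod_univ_two]
  -- det Q2 is a nonnegative real
  obtain ⟨q2, hq2nonneg, hq2⟩ : ∃ q2 : ℝ, 0 ≤ q2 ∧ Q2.det = ((q2 : ℝ) : ℂ) := by
    have hpsd : Q2.PosSemidef := by
      rw [hQ2]; exact Matrix.posSemidef_conjTranspose_mul_self H2
    refine ⟨∏ i, hpsd.1.eigenvalues i,
      Finset.prod_nonneg fun i _ => hpsd.eigenvalues_nonneg i, ?_⟩
    rw [hpsd.1.det_eq_prod_eigenvalues]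
    push_cast
    rfl
  -- the mixed product is nonpositive
  have hmixprod : ((μ 0) ^ 2 - 1) * ((μ 1) ^ 2 - 1) ≤ 0 := by
    have h0 := hμ.2.1 0
    have h1' := hμ.2.1 1
    rcases hmix with ⟨ha, hb⟩ | ⟨ha, hb⟩
    · have e1 : (μ 0) ^ 2 - 1 ≤ 0 := by nlinarith
      have e2 : 0 ≤ (μ 1) ^ 2 - 1 := by nlinarith
      exact mul_nonpos_iff.mpr (Or.inr ⟨e1, e2⟩)
    · have e1 : 0 ≤ (μ 0) ^ 2 - 1 := by nlinarith
      have e2 : (μ 1) ^ 2 - 1 ≤ 0 := by nlinarith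
      exact mul_nonpos_iff.mpr (Or.inl ⟨e1, e2⟩)
  -- conclude det M is a nonpositive real
  set ρ : ℝ := r1 * r2 * Complex.normSq C12.det * (q2 * (((μ 0) ^ 2 - 1) * ((μ 1) ^ 2 - 1)))
    with hρ
  have hMdetval : M.det = ((ρ : ℝ) : ℂ) := by
    rw [hMdet, hsub, Matrix.det_mul, Matrix.det_mul, Matrix.det_conjTranspose, hQdet,
      hq2, hd1c, hd2c, hρ]
    have hstar : (star C12.det) * C12.det = ((Complex.normSq C12.det : ℝ) : ℂ) := by
      rw [Complex.normSq_eq_conj_mul_self]; rfl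
    push_cast
    linear_combination (((r1 : ℂ)) * (r2 : ℂ) * (q2 : ℂ) * (((μ 0 : ℂ)) ^ 2 - 1)
      * (((μ 1 : ℂ)) ^ 2 - 1)) * hstar
  have hρnonpos : ρ ≤ 0 := by
    rw [hρ]
    have h1'' : 0 ≤ Complex.normSq C12.det := Complex.normSq_nonneg _
    have hq : q2 * (((μ 0) ^ 2 - 1) * ((μ 1) ^ 2 - 1)) ≤ 0 :=
      mul_nonpos_of_nonneg_of_nonpos hq2nonneg hmixprod
    have hpos : 0 ≤ r1 * r2 * Complex.normSq C12.det := by positivity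
    exact mul_nonpos_of_nonneg_of_nonpos hpos hq
  -- extract the entries of M
  set α : ℝ := (M 0 0).re with hα
  set β : ℝ := (M 1 1).re with hβ
  set c : ℂ := M 0 1 with hc
  have hM00im : (M 0 0).im = 0 := by
    have h := congrFun (congrFun hMherm 0) 0
    rw [Matrix.conjTranspose_apply] at h
    have := Complex.conj_eq_iff_im.mp h
    exact this
  have hM11im : (M 1 1).im = 0 := by
    have h := congrFun (congrFun hMherm 1) 1
    rw [Matrix.conjTranspose_apply] at h
    exact Complex.conj_eq_iff_im.mp h
  have hM00 : M 0 0 = ((α : ℝ) : ℂ) := by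
    apply Complex.ext <;> simp [hα, hM00im]
  have hM11 : M 1 1 = ((β : ℝ) : ℂ) := by
    apply Complex.ext <;> simp [hβ, hM11im]
  have hM10 : M 1 0 = (starRingEnd ℂ) c := by
    have h := congrFun (congrFun hMherm 0) 1
    rw [Matrix.conjTranspose_apply] at h
    have h2 := congrArg (starRingEnd ℂ) h.symm
    simp only [RCLike.star_def, Complex.conj_conj] at h2
    rw [hc, ← h2]
  have hMdet2 : M.det = ((α * β - Complex.normSq c : ℝ) : ℂ) := by
    rw [Matrix.det_fin_two, hM00, hM11, hM10]
    have : c * (starRingEnd ℂ) c = ((Complex.normSq c : ℝ) : ℂ) := Complex.mul_conj c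
    rw [this]
    push_cast
    ring
  have hquad : α * β ≤ Complex.normSq c := by
    have := hMdetval.symm.trans hMdet2
    have h' : ρ = α * β - Complex.normSq c := by exact_mod_cast this
    linarith [hρnonpos, h'.symm.le]
  -- choose the null vector and build V
  obtain ⟨x, y, hxy, hnull⟩ := NetModAux.exists_null_vector α β c hquad
  set V : Matrix (Fin 2) (Fin 2) ℂ :=
    !![x, -(starRingEnd ℂ) y; y, (starRingEnd ℂ) x] with hVdef
  have hxy' : (starRingEnd ℂ) x * x + (starRingEnd ℂ) y * y = 1 := by
    rw [← Complex.normSq_eq_conj_mul_self, ← Complex.normSq_eq_conj_mul_self,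
      ← Complex.ofReal_add, hxy, Complex.ofReal_one]
  have hV : NetMod.IsUnitary V := by
    rw [NetMod.IsUnitary, hVdef]
    ext i j
    fin_cases i <;> fin_cases j <;>
      simp [Matrix.mul_apply, Fin.sum_univ_two, Matrix.conjTranspose_apply,
        Matrix.one_apply]
    · linear_combination hxy'
    · ring
    · ring
    · linear_combination hxy'
  have hVV' : V * Vᴴ = 1 := mul_eq_one_comm.mp hV
  -- the transformed matrices
  set A1 := G1 * V with hA1def
  set A2 := G2 * V with hA2def
  have hA1gram : A1ᴴ * A1 = Vᴴ * P1 * V := by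
    rw [hA1def, Matrix.conjTranspose_mul, hP1def]
    simp [Matrix.mul_assoc]
  have hA2gram : A2ᴴ * A2 = Vᴴ * P2 * V := by
    rw [hA2def, Matrix.conjTranspose_mul, hP2def]
    simp [Matrix.mul_assoc]
  have hA1pd : (A1ᴴ * A1).PosDef := by
    rw [hA1gram]; exact NetModAux.posdef_conj hP1 V hV
  have hA2pd : (A2ᴴ * A2).PosDef := by
    rw [hA2gram]; exact NetModAux.posdef_conj hP2 V hV
  -- dets are preserved
  have hdetV : Vᴴ.det * V.det = 1 := by
    rw [← Matrix.det_mul, hV, Matrix.det_one]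
  have hA1det : (A1ᴴ * A1).det = ((r1 : ℝ) : ℂ) := by
    rw [hA1gram, Matrix.det_mul, Matrix.det_mul, ← hd1c]
    linear_combination P1.det * hdetV
  have hA2det : (A2ᴴ * A2).det = ((r2 : ℝ) : ℂ) := by
    rw [hA2gram, Matrix.det_mul, Matrix.det_mul, ← hd2c]
    linear_combination P2.det * hdetV
  -- the (0,0) entries
  have hexp : ∀ N : Matrix (Fin 2) (Fin 2) ℂ, (Vᴴ * N * V) 0 0
      = (starRingEnd ℂ) x * (N 0 0 * x + N 0 1 * y)
        + (starRingEnd ℂ) y * (N 1 0 * x + N 1 1 * y) := by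
    intro N
    rw [hVdef]
    simp [Matrix.mul_apply, Fin.sum_univ_two, Matrix.conjTranspose_apply]
    ring
  have hMnull : (Vᴴ * M * V) 0 0 = 0 := by
    rw [hexp M, hM00, hM11, hM10, ← hc]
    exact hnull
  have hzrel : ((r2 : ℝ) : ℂ) * ((Vᴴ * P1 * V) 0 0)
      = ((r1 : ℝ) : ℂ) * ((Vᴴ * P2 * V) 0 0) := by
    have hsplit : Vᴴ * M * V
        = P2.det • (Vᴴ * P1 * V) - P1.det • (Vᴴ * P2 * V) := by
      simp only [hM, Matrix.mul_sub, Matrix.sub_mul, Matrix.mul_smul, Matrix.smul_mul]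
    have h := hMnull
    rw [hsplit] at h
    simp only [Matrix.sub_apply, Matrix.smul_apply, smul_eq_mul, hd1c, hd2c] at h
    linear_combination h
  have hs1 : 0 < ((A1ᴴ * A1) 0 0).re := NetModAux.posdef_entry00_re_pos hA1pd
  have hs2 : 0 < ((A2ᴴ * A2) 0 0).re := NetModAux.posdef_entry00_re_pos hA2pd
  have hzre : r2 * ((A1ᴴ * A1) 0 0).re = r1 * ((A2ᴴ * A2) 0 0).re := by
    have h := congrArg Complex.re hzrel
    rw [← hA1gram, ← hA2gram] at h
    simpa [Complex.mul_re] using h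
  have e1 : (A1ᴴ * A1).det.re = r1 := by rw [hA1det]; simp
  have e2 : (A2ᴴ * A2).det.re = r2 := by rw [hA2det]; simp
  have hfinal : (A1ᴴ * A1).det.re / ((A1ᴴ * A1) 0 0).re
      = (A2ᴴ * A2).det.re / ((A2ᴴ * A2) 0 0).re := by
    rw [e1, e2, div_eq_div_iff hs1.ne' hs2.ne']
    linarith
  obtain ⟨U1, T1, hU1, hTri1, hAUT1, hdiag1, hT1⟩ := NetModAux.qr_two A1 hA1pd
  obtain ⟨U2, T2, hU2, hTri2, hAUT2, hdiag2, hT2⟩ := NetModAux.qr_two A2 hA2pd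
  refine ⟨U1, U2, V, T1, T2, ⟨hU1, hU2, hV, hTri1, hTri2, ?_, ?_⟩, hdiag1, hdiag2, ?_⟩
  · rw [← hAUT1, hA1def, Matrix.mul_assoc, hVV', Matrix.mul_one]
  · rw [← hAUT2, hA2def, Matrix.mul_assoc, hVV', Matrix.mul_one]
  · rw [hT1, hT2, hfinal]
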